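/- Let A₁ be the quotient of the free noncommutative ℤ/2-algebra on five generators a₁, a₂, a₃, a₄, a₅ by the two-sided ideal generated by the five elements a₄a₂, a₁a₄ + a₅a₃, a₂a₅, 1 + a₂a₁, and 1 + a₃a₂. Then in A₁ the images of a₄ and a₅ are zero and the images of a₁ and a₃ are equal, and A₁ is isomorphic as a ℤ/2-algebra to C₁, the quotient of the free noncommutative ℤ/2-algebra on two generators a₁, a₂ by the two-sided ideal generated by a₁a₂ − 1 and a₂a₁ − 1. -/

import Mathlib

noncomputable section

/-- The quotient of a ℤ/2-algebra by a ring congruence is again a ℤ/2-algebra,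
via the quotient map. -/
noncomputable instance ringConQuotientAlgebra
    {R : Type*} [Ring R] [Algebra (ZMod 2) R] (c : RingCon R) :
    Algebra (ZMod 2) c.Quotient :=
  RingHom.toAlgebra' ((RingCon.mk' c).comp (algebraMap (ZMod 2) R)) (by
    intro r x
    change (RingCon.mk' c) (algebraMap (ZMod 2) R r) * x = x * (RingCon.mk' c) (algebraMap (ZMod 2) R r)
    obtain rfl | rfl : r = 0 ∨ r = 1 := by revert r; decide
    all_goals simp)

/-- The generators `a₁, …, a₅` of the free ℤ/2-algebra on five letters. -/
def a (i : Fin 5) : FreeAlgebra (ZMod 2) (Fin 5) := FreeAlgebra.ι (ZMod 2) i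

/-- The relations `a₄a₂`, `a₁a₄ + a₅a₃`, `a₂a₅`, `1 + a₂a₁`, `1 + a₃a₂` for the
characteristic algebra of the knot `L₁`. -/
def relA1 : Set (FreeAlgebra (ZMod 2) (Fin 5)) :=
  {a 3 * a 1, a 0 * a 3 + a 4 * a 2, a 1 * a 4, 1 + a 1 * a 0, 1 + a 2 * a 1}

/-- The characteristic algebra `A₁` of the knot `L₁`. -/
def A1 := (TwoSidedIdeal.span relA1).ringCon.Quotient

instance : Ring A1 := inferInstanceAs (Ring (TwoSidedIdeal.span relA1).ringCon.Quotient)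
instance : Algebra (ZMod 2) A1 :=
  inferInstanceAs (Algebra (ZMod 2) (TwoSidedIdeal.span relA1).ringCon.Quotient)

/-- The quotient map onto `A₁`. -/
def q1 : FreeAlgebra (ZMod 2) (Fin 5) →+* A1 :=
  RingCon.mk' (TwoSidedIdeal.span relA1).ringCon

/-- The generators of the free ℤ/2-algebra on two letters. -/
def b (i : Fin 2) : FreeAlgebra (ZMod 2) (Fin 2) := FreeAlgebra.ι (ZMod 2) i

/-- The simplified characteristic algebra
`C₁ = ℤ₂⟨a₁, a₂⟩/(a₁a₂ − 1, a₂a₁ − 1)`. -/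
def C1 := (TwoSidedIdeal.span {b 0 * b 1 - 1, b 1 * b 0 - 1}).ringCon.Quotient

instance : Ring C1 :=
  inferInstanceAs (Ring (TwoSidedIdeal.span {b 0 * b 1 - 1, b 1 * b 0 - 1}).ringCon.Quotient)
instance : Algebra (ZMod 2) C1 :=
  inferInstanceAs
    (Algebra (ZMod 2) (TwoSidedIdeal.span {b 0 * b 1 - 1, b 1 * b 0 - 1}).ringCon.Quotient)

/-! ### Auxiliary infrastructure -/

/-- Upgrade a ring homomorphism between ℤ/2-algebras to an algebra homomorphism. -/
def toAlg2 {A B : Type*} [Ring A] [Ring B] [Algebra (ZMod 2) A] [Algebra (ZMod 2) B]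
    (f : A →+* B) : A →ₐ[ZMod 2] B :=
  { f with commutes' := by intro r; obtain rfl | rfl : r = 0 ∨ r = 1 := (by revert r; decide) <;> simp }

@[simp] lemma toAlg2_apply {A B : Type*} [Ring A] [Ring B] [Algebra (ZMod 2) A]
    [Algebra (ZMod 2) B] (f : A →+* B) (x : A) : toAlg2 f x = f x := rfl

/-- Lift an algebra homomorphism through a ring congruence quotient. -/
def liftAlg {R S : Type*} [Ring R] [Ring S] [Algebra (ZMod 2) R] [Algebra (ZMod 2) S]
    (c : RingCon R) (f : R →ₐ[ZMod 2] S) (h : ∀ x y, c x y → f x = f y) :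
    c.Quotient →ₐ[ZMod 2] S where
  toFun := Quotient.lift f h
  map_one' := map_one f
  map_mul' := by rintro ⟨x⟩ ⟨y⟩; exact map_mul f x y
  map_zero' := map_zero f
  map_add' := by rintro ⟨x⟩ ⟨y⟩; exact map_add f x y
  commutes' r := f.commutes r

lemma liftAlg_mk' {R S : Type*} [Ring R] [Ring S] [Algebra (ZMod 2) R] [Algebra (ZMod 2) S]
    (c : RingCon R) (f : R →ₐ[ZMod 2] S) (h : ∀ x y, c x y → f x = f y) (x : R) :
    liftAlg c f h ((RingCon.mk' c) x) = f x := rfl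

/-- Vanishing on the generating relations gives the lifting condition. -/
lemma span_cond {R S : Type*} [Ring R] [Ring S] [Algebra (ZMod 2) R] [Algebra (ZMod 2) S]
    (s : Set R) (f : R →ₐ[ZMod 2] S) (h0 : ∀ r ∈ s, f r = 0) :
    ∀ x y, (TwoSidedIdeal.span s).ringCon x y → f x = f y := by
  intro x y hxy
  rw [TwoSidedIdeal.rel_iff] at hxy
  rw [TwoSidedIdeal.mem_span_iff] at hxy
  have : x - y ∈ TwoSidedIdeal.ker f := by
    apply hxy
    intro r hr
    rw [SetLike.mem_coe, TwoSidedIdeal.mem_ker]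
    exact h0 r hr
  rw [TwoSidedIdeal.mem_ker, map_sub, sub_eq_zero] at this
  exact this

/-- The quotient map onto `A₁`, as an algebra homomorphism. -/
def qA : FreeAlgebra (ZMod 2) (Fin 5) →ₐ[ZMod 2] A1 := toAlg2 q1

/-- The quotient map onto `C₁`, as an algebra homomorphism. -/
def qC : FreeAlgebra (ZMod 2) (Fin 2) →ₐ[ZMod 2] C1 :=
  toAlg2 (RingCon.mk' (TwoSidedIdeal.span {b 0 * b 1 - 1, b 1 * b 0 - 1}).ringCon)

lemma qA_rel : ∀ r ∈ relA1, qA r = 0 := by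
  intro r hr
  have : r ∈ TwoSidedIdeal.span relA1 := TwoSidedIdeal.subset_span hr
  rw [TwoSidedIdeal.mem_iff] at this
  exact (RingCon.eq _).mpr this

lemma qC_rel : ∀ r ∈ ({b 0 * b 1 - 1, b 1 * b 0 - 1} :
    Set (FreeAlgebra (ZMod 2) (Fin 2))), qC r = 0 := by
  intro r hr
  have : r ∈ TwoSidedIdeal.span {b 0 * b 1 - 1, b 1 * b 0 - 1} := TwoSidedIdeal.subset_span hr
  rw [TwoSidedIdeal.mem_iff] at this
  exact (RingCon.eq _).mpr this

lemma two_eq_zero_A1 : (1 + 1 : A1) = 0 := by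
  have : ((1 : ZMod 2) + 1) = 0 := by decide
  calc (1 + 1 : A1) = algebraMap (ZMod 2) A1 1 + algebraMap (ZMod 2) A1 1 := by
        rw [map_one]
    _ = algebraMap (ZMod 2) A1 (1 + 1) := by rw [map_add]
    _ = 0 := by rw [this, map_zero]

lemma two_eq_zero_C1 : (1 + 1 : C1) = 0 := by
  have : ((1 : ZMod 2) + 1) = 0 := by decide
  calc (1 + 1 : C1) = algebraMap (ZMod 2) C1 1 + algebraMap (ZMod 2) C1 1 := by
        rw [map_one]
    _ = algebraMap (ZMod 2) C1 (1 + 1) := by rw [map_add]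
    _ = 0 := by rw [this, map_zero]

lemma one_add_eq_one_A1 {t : A1} (h : 1 + t = 0) : t = 1 := by
  have : (1 : A1) + (1 + t) = 1 + 0 := by rw [h]
  rwa [← add_assoc, two_eq_zero_A1, zero_add, add_zero] at this

/-- Key relations in A1. -/
lemma rel10 : q1 (a 1) * q1 (a 0) = 1 := by
  have h := qA_rel (1 + a 1 * a 0) (by simp [relA1])
  rw [map_add, map_one, map_mul] at h
  exact one_add_eq_one_A1 h

lemma rel21 : q1 (a 2) * q1 (a 1) = 1 := by
  have h := qA_rel (1 + a 2 * a 1) (by simp [relA1])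
  rw [map_add, map_one, map_mul] at h
  exact one_add_eq_one_A1 h

lemma rel31 : q1 (a 3) * q1 (a 1) = 0 := by
  have h := qA_rel (a 3 * a 1) (by simp [relA1])
  rwa [map_mul] at h

lemma rel14 : q1 (a 1) * q1 (a 4) = 0 := by
  have h := qA_rel (a 1 * a 4) (by simp [relA1])
  rwa [map_mul] at h

lemma q1_a3 : q1 (a 3) = 0 := by
  calc q1 (a 3) = q1 (a 3) * (q1 (a 1) * q1 (a 0)) := by rw [rel10, mul_one]
    _ = (q1 (a 3) * q1 (a 1)) * q1 (a 0) := by rw [mul_assoc]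
    _ = 0 := by rw [rel31, zero_mul]

lemma rel0342 : q1 (a 0) * q1 (a 3) + q1 (a 4) * q1 (a 2) = 0 := by
  have h := qA_rel (a 0 * a 3 + a 4 * a 2) (by simp [relA1])
  rwa [map_add, map_mul, map_mul] at h

lemma rel42 : q1 (a 4) * q1 (a 2) = 0 := by
  have h := rel0342
  rwa [q1_a3, mul_zero, zero_add] at h

lemma q1_a4 : q1 (a 4) = 0 := by
  calc q1 (a 4) = q1 (a 4) * (q1 (a 2) * q1 (a 1)) := by rw [rel21, mul_one]
    _ = (q1 (a 4) * q1 (a 2)) * q1 (a 1) := by rw [mul_assoc]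
    _ = 0 := by rw [rel42, zero_mul]

lemma q1_a0_eq_a2 : q1 (a 0) = q1 (a 2) := by
  calc q1 (a 0) = (q1 (a 2) * q1 (a 1)) * q1 (a 0) := by rw [rel21, one_mul]
    _ = q1 (a 2) * (q1 (a 1) * q1 (a 0)) := by rw [mul_assoc]
    _ = q1 (a 2) := by rw [rel10, mul_one]

/-- Relations in `C1`. -/
lemma relC01 : qC (b 0) * qC (b 1) = 1 := by
  have h := qC_rel (b 0 * b 1 - 1) (by simp)
  rw [map_sub, map_one, map_mul, sub_eq_zero] at h
  exact h

lemma relC10 : qC (b 1) * qC (b 0) = 1 := by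
  have h := qC_rel (b 1 * b 0 - 1) (by simp)
  rw [map_sub, map_one, map_mul, sub_eq_zero] at h
  exact h

/-- The map `FreeAlgebra₅ → C1`. -/
def phi0 : FreeAlgebra (ZMod 2) (Fin 5) →ₐ[ZMod 2] C1 :=
  FreeAlgebra.lift (ZMod 2) ![qC (b 0), qC (b 1), qC (b 0), 0, 0]

lemma phi0_a (i : Fin 5) : phi0 (a i) = ![qC (b 0), qC (b 1), qC (b 0), 0, 0] i :=
  FreeAlgebra.lift_ι_apply _ _

lemma phi0_rel : ∀ r ∈ relA1, phi0 r = 0 := by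
  intro r hr
  simp only [relA1, Set.mem_insert_iff, Set.mem_singleton_iff] at hr
  rcases hr with h | h | h | h | h <;> subst h <;>
    simp only [map_add, map_mul, map_one, phi0_a] <;>
    simp [Matrix.cons_val_zero, Matrix.cons_val_one]
  · rw [relC10]; exact two_eq_zero_C1
  · rw [relC01]; exact two_eq_zero_C1

/-- The map `FreeAlgebra₂ → A1`. -/
def psi0 : FreeAlgebra (ZMod 2) (Fin 2) →ₐ[ZMod 2] A1 :=
  FreeAlgebra.lift (ZMod 2) ![q1 (a 0), q1 (a 1)]

lemma psi0_b (i : Fin 2) : psi0 (b i) = ![q1 (a 0), q1 (a 1)] i :=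
  FreeAlgebra.lift_ι_apply _ _

lemma psi0_rel : ∀ r ∈ ({b 0 * b 1 - 1, b 1 * b 0 - 1} :
    Set (FreeAlgebra (ZMod 2) (Fin 2))), psi0 r = 0 := by
  intro r hr
  simp only [Set.mem_insert_iff, Set.mem_singleton_iff] at hr
  rcases hr with h | h <;> subst h <;>
    simp only [map_sub, map_mul, map_one, psi0_b] <;>
    simp only [Matrix.cons_val_zero, Matrix.cons_val_one, Matrix.head_cons]
  · rw [q1_a0_eq_a2, rel21]; simp
  · rw [rel10]; simp

/-- The induced map `A1 → C1`. -/
def phi : A1 →ₐ[ZMod 2] C1 :=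
  liftAlg _ phi0 (span_cond relA1 phi0 phi0_rel)

/-- The induced map `C1 → A1`. -/
def psi : C1 →ₐ[ZMod 2] A1 :=
  liftAlg _ psi0 (span_cond _ psi0 psi0_rel)

lemma phi_qA (x : FreeAlgebra (ZMod 2) (Fin 5)) : phi (qA x) = phi0 x := rfl

lemma psi_qC (x : FreeAlgebra (ZMod 2) (Fin 2)) : psi (qC x) = psi0 x := rfl

lemma phi0_a0 : phi0 (a 0) = qC (b 0) := by rw [phi0_a]; rfl
lemma phi0_a1 : phi0 (a 1) = qC (b 1) := by rw [phi0_a]; rfl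
lemma phi0_a2 : phi0 (a 2) = qC (b 0) := by rw [phi0_a]; rfl
lemma phi0_a3 : phi0 (a 3) = 0 := by rw [phi0_a]; rfl
lemma phi0_a4 : phi0 (a 4) = 0 := by rw [phi0_a]; rfl
lemma psi0_b0 : psi0 (b 0) = q1 (a 0) := by rw [psi0_b]; rfl
lemma psi0_b1 : psi0 (b 1) = q1 (a 1) := by rw [psi0_b]; rfl

lemma psi_phi0 : (psi.comp phi0) = qA := by
  apply FreeAlgebra.hom_ext
  funext i
  fin_cases i
  · show psi (phi0 (a 0)) = qA (a 0)
    rw [phi0_a0, psi_qC, psi0_b0]; rfl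
  · show psi (phi0 (a 1)) = qA (a 1)
    rw [phi0_a1, psi_qC, psi0_b1]; rfl
  · show psi (phi0 (a 2)) = qA (a 2)
    rw [phi0_a2, psi_qC, psi0_b0]
    exact q1_a0_eq_a2
  · show psi (phi0 (a 3)) = qA (a 3)
    rw [phi0_a3, map_zero]
    exact q1_a3.symm
  · show psi (phi0 (a 4)) = qA (a 4)
    rw [phi0_a4, map_zero]
    exact q1_a4.symm

lemma phi_psi0 : (phi.comp psi0) = qC := by
  apply FreeAlgebra.hom_ext
  funext i
  fin_cases i
  · show phi (psi0 (b 0)) = qC (b 0)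
    rw [psi0_b0]
    show phi (qA (a 0)) = qC (b 0)
    rw [phi_qA, phi0_a0]
  · show phi (psi0 (b 1)) = qC (b 1)
    rw [psi0_b1]
    show phi (qA (a 1)) = qC (b 1)
    rw [phi_qA, phi0_a1]

/-- In `A₁` the images of `a₄` and `a₅` vanish, the images of `a₁` and `a₃`
agree, and `A₁` is isomorphic as a ℤ/2-algebra to
`C₁ = ℤ₂⟨a₁, a₂⟩/(1 = a₁a₂ = a₂a₁)`. -/
theorem charAlgebraL1_simplification :
    q1 (a 3) = 0 ∧ q1 (a 4) = 0 ∧ q1 (a 0) = q1 (a 2) ∧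
      Nonempty (A1 ≃ₐ[ZMod 2] C1) := by
  refine ⟨q1_a3, q1_a4, q1_a0_eq_a2, ⟨AlgEquiv.ofAlgHom phi psi ?_ ?_⟩⟩
  · apply AlgHom.ext
    rintro ⟨x⟩
    show phi (psi (qC x)) = qC x
    rw [psi_qC]
    exact DFunLike.congr_fun phi_psi0 x
  · apply AlgHom.ext
    rintro ⟨x⟩
    show psi (phi (qA x)) = qA x
    rw [phi_qA]
    exact DFunLike.congr_fun psi_phi0 x

end
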